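/- arXiv:quant-ph/0408078 — 5 statements merged into one kernel-verified Lean document; each statement's English description precedes it below -/
import Mathlib

section
/- Let q be a prime power and let C be a linear [n,k]_q code over the finite field F_q. Let d⊥ denote the minimum distance of the dual code C⊥. Arrange the q^k codewords of C as the columns of an n × q^k matrix A over F_q. Then A is an orthogonal array of strength t = d⊥ − 1; that is, for every choice of t = d⊥ − 1 rows of A, every t-tuple of elements of F_q occurs exactly q^{k−t} times among the columns of the corresponding t × q^k subarray. -/
/-- The dual code of a linear code `C ⊆ F^n`, consisting of all vectors whose
standard dot product with every codeword of `C` vanishes. -/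
def dualCode {F : Type*} [CommRing F] {n : ℕ} (C : Submodule F (Fin n → F)) :
    Submodule F (Fin n → F) where
  carrier := {x | ∀ y ∈ C, ∑ i, x i * y i = 0}
  zero_mem' := by simp
  add_mem' := by
    intro a b ha hb y hy
    simp only [Pi.add_apply, add_mul, Finset.sum_add_distrib]
    rw [ha y hy, hb y hy, add_zero]
  smul_mem' := by
    intro c x hx y hy
    simp only [Pi.smul_apply, smul_eq_mul, mul_assoc, ← Finset.mul_sum]
    rw [hx y hy, mul_zero]

/-- **Orthogonal arrays from linear codes** (Theorem 4.6 in Hedayat–Sloane–Stufken):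
if `C` is a linear `[n,k]_q` code whose dual code has minimum distance `d⊥`, then the
`q^k` codewords of `C`, arranged as the columns of an `n × q^k` matrix, form an
orthogonal array of strength `t = d⊥ - 1`: for every choice of `t` distinct rows and
every `t`-tuple `v` of field elements, exactly `q^(k-t)` codewords agree with `v` on
those rows. -/
theorem orthogonal_array_of_linear_code
    {F : Type*} [Field F] [Fintype F] [DecidableEq F]
    (q n k dperp t : ℕ) (hq : Fintype.card F = q)
    (C : Submodule F (Fin n → F))
    (hk : Module.finrank F C = k)
    (hdual_lb : ∀ x ∈ dualCode C, x ≠ 0 → dperp ≤ hammingNorm x)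
    (hdual_attained : ∃ x ∈ dualCode C, x ≠ 0 ∧ hammingNorm x = dperp)
    (ht : t = dperp - 1)
    (r : Fin t → Fin n) (hr : Function.Injective r) (v : Fin t → F) :
    Nat.card {c : C // ∀ i : Fin t, (c : Fin n → F) (r i) = v i} = q ^ (k - t) := by
  classical
  obtain ⟨x0, hx0C, hx0ne, hx0norm⟩ := hdual_attained
  have hd1 : 1 ≤ dperp := by
    rw [← hx0norm]
    exact Nat.one_le_iff_ne_zero.mpr (by simpa [hammingNorm_eq_zero] using hx0ne)
  set φ : C →ₗ[F] (Fin t → F) := (LinearMap.funLeft F F r).comp C.subtype with hφ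
  have hφapp : ∀ (c : C) (i : Fin t), φ c i = (c : Fin n → F) (r i) := fun c i => rfl
  have hsurj : Function.Surjective φ := by
    by_contra hns
    rw [← LinearMap.range_eq_top, ← Ne, ← lt_top_iff_ne_top] at hns
    obtain ⟨g, hg0, hgker⟩ := (LinearMap.range φ).exists_le_ker_of_lt_top hns
    set a : Fin t → F := fun i => g (Pi.single i 1) with ha
    have hgrep : ∀ w : Fin t → F, g w = ∑ i, w i * a i := by
      intro w
      have hw : w = ∑ i, w i • (Pi.single i 1 : Fin t → F) := by
        funext j
        simp [Pi.single_apply, Finset.sum_ite_eq]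
      conv_lhs => rw [hw]
      rw [map_sum]
      simp [smul_eq_mul, ha]
    have hane : a ≠ 0 := by
      intro h
      apply hg0
      apply LinearMap.ext
      intro w
      rw [hgrep, h]
      simp
    obtain ⟨i0, hi0⟩ := Function.ne_iff.mp hane
    set x : Fin n → F := fun j => ∑ i, if r i = j then a i else 0 with hx
    have hxr : ∀ i, x (r i) = a i := by
      intro i
      rw [hx]
      simp only []
      rw [Finset.sum_eq_single i]
      · simp
      · intro b _ hb
        exact if_neg (fun h => hb (hr h))
      · simp
    have hxC : x ∈ dualCode C := by
      intro y hy
      have h1 : ∑ j, x j * y j = ∑ i, a i * y (r i) := by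
        simp only [hx, Finset.sum_mul]
        rw [Finset.sum_comm]
        refine Finset.sum_congr rfl fun i _ => ?_
        rw [Finset.sum_eq_single (r i)]
        · simp
        · intro b _ hb; simp [Ne.symm hb]
        · simp
      have h2 : g (φ ⟨y, hy⟩) = 0 := hgker ⟨⟨y, hy⟩, rfl⟩
      rw [hgrep] at h2
      rw [h1, ← h2]
      exact Finset.sum_congr rfl fun i _ => (mul_comm _ _)
    have hxne : x ≠ 0 := by
      intro h
      apply hi0
      have := hxr i0
      rw [h] at this
      simpa using this.symm
    have hnorm : hammingNorm x ≤ t := by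
      have hsub : (Finset.univ.filter fun j => x j ≠ 0) ⊆ Finset.univ.image r := by
        intro j hj
        simp only [Finset.mem_filter, Finset.mem_univ, true_and] at hj
        rcases Finset.exists_ne_zero_of_sum_ne_zero (by simpa [hx] using hj) with ⟨i, _, hi⟩
        have : r i = j := by by_contra h; simp [h] at hi
        exact Finset.mem_image.mpr ⟨i, Finset.mem_univ i, this⟩
      calc hammingNorm x = (Finset.univ.filter fun j => x j ≠ 0).card := rfl
        _ ≤ (Finset.univ.image r).card := Finset.card_le_card hsub
        _ ≤ Finset.univ.card := Finset.card_image_le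
        _ = t := Finset.card_univ.trans (Fintype.card_fin t)
    have := hdual_lb x hxC hxne
    omega
  -- cardinalities
  have hfinC : Module.Finite F C := by infer_instance
  have hrange : LinearMap.range φ = ⊤ := LinearMap.range_eq_top.mpr hsurj
  have hfr : Module.finrank F (LinearMap.range φ) = t := by
    rw [hrange, finrank_top, Module.finrank_pi, Fintype.card_fin]
  have hrn := LinearMap.finrank_range_add_finrank_ker φ
  rw [hfr, hk] at hrn
  have hker_rank : Module.finrank F (LinearMap.ker φ) = k - t := by omega
  obtain ⟨c0, hc0⟩ := hsurj v
  have e : {c : C // ∀ i : Fin t, (c : Fin n → F) (r i) = v i} ≃ LinearMap.ker φ :=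
    { toFun := fun c => ⟨c.1 - c0, by
        rw [LinearMap.mem_ker, map_sub, hc0]
        ext i
        simp [hφapp, c.2 i]⟩
      invFun := fun x => ⟨x.1 + c0, by
        intro i
        have h0 : φ x.1 = 0 := x.2
        have := congrFun h0 i
        rw [hφapp] at this
        rw [Pi.zero_apply] at this
        have hv := congrFun hc0 i
        rw [hφapp] at hv
        simp only [Submodule.coe_add, Pi.add_apply, this, hv, zero_add]⟩
      left_inv := fun c => by ext1; simp
      right_inv := fun x => by ext1; simp }
  rw [Nat.card_congr e]
  have hfin : Fintype (LinearMap.ker φ) := Fintype.ofFinite _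
  rw [Nat.card_eq_fintype_card, Module.card_eq_pow_finrank (K := F), hker_rank, hq]
end

section
/- For all integers d ≥ 2 and n ≥ 1, the Cayley graph of the group Z_d^{2n} with respect to the 2n standard coordinate generators e_1, …, e_{2n} contains a directed Hamilton cycle; equivalently, there exists a cyclic enumeration g_1, …, g_{d^{2n}} of all elements of Z_d^{2n} such that each difference g_{t+1} − g_t (indices mod d^{2n}) is one of the standard coordinate vectors e_1, …, e_{2n}. -/
/-- Two naturals below `d^m` with the same base-`d` digits are equal. -/
private lemma digits_determine (d : ℕ) (hd : 2 ≤ d) :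
    ∀ m x y : ℕ, x < d ^ m → y < d ^ m →
      (∀ i, i < m → x / d ^ i % d = y / d ^ i % d) → x = y := by
  intro m
  induction m with
  | zero =>
    intro x y hx hy _
    simp only [pow_zero, Nat.lt_one_iff] at hx hy
    omega
  | succ m ih =>
    intro x y hx hy h
    have h0 := h 0 (Nat.succ_pos m)
    simp only [pow_zero, Nat.div_one] at h0
    have hpow : d ^ (m + 1) = d * d ^ m := by rw [pow_succ]; ring
    have hx' : x / d < d ^ m := Nat.div_lt_of_lt_mul (by rwa [← hpow])
    have hy' : y / d < d ^ m := Nat.div_lt_of_lt_mul (by rwa [← hpow])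
    have h' : ∀ i, i < m → (x / d) / d ^ i % d = (y / d) / d ^ i % d := by
      intro i hi
      have hh := h (i + 1) (by omega)
      rw [Nat.div_div_eq_div_mul, Nat.div_div_eq_div_mul]
      have e : d * d ^ i = d ^ (i + 1) := by rw [pow_succ]; ring
      rw [e]; exact hh
    have hq : x / d = y / d := ih (x / d) (y / d) hx' hy' h'
    calc x = d * (x / d) + x % d := (Nat.div_add_mod x d).symm
      _ = d * (y / d) + y % d := by rw [hq, h0]
      _ = y := Nat.div_add_mod y d

/-- **Hamilton cycle in the Cayley graph of `Z_d^{2n}`.**  For all `d ≥ 2` and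
`n ≥ 1`, the Cayley graph of `Z_d^{2n}` with respect to the `2n` standard
coordinate generators contains a directed Hamilton cycle: there is a cyclic
enumeration `g` of all `d^{2n}` elements of `Z_d^{2n}` such that each consecutive
difference is a standard coordinate vector `e_i`. -/
theorem hamilton_cycle_zmod_pow (d n : ℕ) (hd : 2 ≤ d) (hn : 1 ≤ n) :
    ∃ g : ZMod (d ^ (2 * n)) → (Fin (2 * n) → ZMod d),
      Function.Bijective g ∧
      ∀ t : ZMod (d ^ (2 * n)),
        ∃ i : Fin (2 * n), g (t + 1) - g t = Pi.single i 1 := by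
  set m := 2 * n with hm
  have hm1 : 1 ≤ m := by omega
  have hd0 : 0 < d := by omega
  have hdm : 1 < d ^ m := by
    calc 1 < d ^ 1 := by rw [pow_one]; omega
      _ ≤ d ^ m := Nat.pow_le_pow_right hd0 hm1
  haveI : NeZero d := ⟨by omega⟩
  haveI : NeZero (d ^ m) := ⟨by positivity⟩
  haveI : Fact (1 < d ^ m) := ⟨hdm⟩
  refine ⟨fun t i => ((t.val / d ^ (i : ℕ) : ℕ) : ZMod d) -
      ((t.val / d ^ ((i : ℕ) + 1) : ℕ) : ZMod d), ?_, ?_⟩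
  · rw [Fintype.bijective_iff_injective_and_card]
    constructor
    · intro s t hst
      have key : ∀ j : ℕ,
          ((s.val / d ^ (m - j) : ℕ) : ZMod d) = ((t.val / d ^ (m - j) : ℕ) : ZMod d) := by
        intro j
        induction j with
        | zero =>
          simp only [Nat.sub_zero]
          rw [Nat.div_eq_of_lt (ZMod.val_lt s), Nat.div_eq_of_lt (ZMod.val_lt t)]
        | succ j ihj =>
          by_cases hj : m - (j + 1) = m - j
          · rw [hj]; exact ihj
          · have hlt : m - (j + 1) < m := by omega
            have hplus : m - (j + 1) + 1 = m - j := by omega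
            have hi := congrFun hst ⟨m - (j + 1), hlt⟩
            simp only [hplus] at hi
            rw [ihj] at hi
            exact sub_left_inj.mp hi
      have hdig : ∀ i, i < m → s.val / d ^ i % d = t.val / d ^ i % d := by
        intro i hi
        have hk := key (m - i)
        rw [show m - (m - i) = i by omega] at hk
        rwa [ZMod.natCast_eq_natCast_iff'] at hk
      have hv : s.val = t.val :=
        digits_determine d hd m s.val t.val (ZMod.val_lt s) (ZMod.val_lt t) hdig
      exact ZMod.val_injective _ hv
    · simp [ZMod.card, Fintype.card_fun]
  · intro t
    have hTlt : t.val < d ^ m := ZMod.val_lt t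
    have hval : (t + 1).val = (t.val + 1) % d ^ m := by
      rw [ZMod.val_add, ZMod.val_one]
    rcases Nat.lt_or_ge (t.val + 1) (d ^ m) with h1 | h1
    · -- no wraparound: carry chain of length k = v_d(t.val+1)
      set N := t.val + 1 with hN
      have hvalN : (t + 1).val = N := by rw [hval, Nat.mod_eq_of_lt h1]
      set k := Nat.findGreatest (fun i => d ^ i ∣ N) m with hkdef
      have hk : d ^ k ∣ N :=
        Nat.findGreatest_spec (P := fun i => d ^ i ∣ N) (Nat.zero_le m) (by simp)
      have hkle : k ≤ m := Nat.findGreatest_le (P := fun i => d ^ i ∣ N) m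
      have hkm : k < m := by
        rcases lt_or_eq_of_le hkle with h | h
        · exact h
        · exfalso
          rw [h] at hk
          have := Nat.le_of_dvd (by omega) hk
          omega
      have hndvd : ∀ j, k < j → j ≤ m → ¬ d ^ j ∣ N := by
        intro j hj hjm
        exact Nat.findGreatest_is_greatest (P := fun i => d ^ i ∣ N) hj hjm
      have hdvd_iff : ∀ j, j ≤ m → (d ^ j ∣ N ↔ j ≤ k) := by
        intro j hjm
        constructor
        · intro h
          by_contra hc
          exact hndvd j (by omega) hjm h
        · intro h
          exact dvd_trans (pow_dvd_pow d h) hk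
      refine ⟨⟨k, hkm⟩, ?_⟩
      funext i
      have hi : (i : ℕ) < m := i.isLt
      have hsd : ∀ j : ℕ, N / d ^ j = t.val / d ^ j + if d ^ j ∣ N then 1 else 0 :=
        fun j => Nat.succ_div
      simp only [Pi.sub_apply, Pi.single_apply]
      rw [hvalN, hsd (i : ℕ), hsd ((i : ℕ) + 1)]
      have e1 : (if d ^ (i : ℕ) ∣ N then (1 : ℕ) else 0)
          = if (i : ℕ) ≤ k then 1 else 0 := by
        by_cases h : (i : ℕ) ≤ k
        · rw [if_pos ((hdvd_iff _ (le_of_lt hi)).mpr h), if_pos h]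
        · rw [if_neg (fun hc => h ((hdvd_iff _ (le_of_lt hi)).mp hc)), if_neg h]
      have e2 : (if d ^ ((i : ℕ) + 1) ∣ N then (1 : ℕ) else 0)
          = if (i : ℕ) + 1 ≤ k then 1 else 0 := by
        by_cases h : (i : ℕ) + 1 ≤ k
        · rw [if_pos ((hdvd_iff _ (by omega)).mpr h), if_pos h]
        · rw [if_neg (fun hc => h ((hdvd_iff _ (by omega)).mp hc)), if_neg h]
      rw [e1, e2]
      have efin : (i = (⟨k, hkm⟩ : Fin m)) ↔ ((i : ℕ) = k) := Fin.ext_iff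
      rw [show (if i = (⟨k, hkm⟩ : Fin m) then (1 : ZMod d) else 0)
          = if (i : ℕ) = k then 1 else 0 from if_congr efin rfl rfl]
      push_cast
      split_ifs <;> first | ring1 | (exfalso; omega)
    · -- wraparound: t.val = d^m - 1
      have hT : t.val = d ^ m - 1 := by omega
      have hval0 : (t + 1).val = 0 := by
        rw [hval, show t.val + 1 = d ^ m by omega, Nat.mod_self]
      have hdiv : ∀ j, j ≤ m → (d ^ m - 1) / d ^ j = d ^ (m - j) - 1 := by
        intro j hj
        have hA : 0 < d ^ j := pow_pos hd0 j
        have hB : 0 < d ^ (m - j) := pow_pos hd0 (m - j)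
        have hAB : d ^ j * d ^ (m - j) = d ^ m := by
          rw [← pow_add]; congr 1; omega
        apply Nat.div_eq_of_lt_le
        · rw [Nat.sub_mul, one_mul, mul_comm, hAB]
          exact Nat.sub_le_sub_left hA (d ^ m)
        · rw [Nat.sub_add_cancel hB, mul_comm, hAB]
          exact Nat.sub_lt (by positivity) one_pos
      refine ⟨⟨m - 1, by omega⟩, ?_⟩
      funext i
      have hi : (i : ℕ) < m := i.isLt
      simp only [Pi.sub_apply, Pi.single_apply]
      rw [hval0, hT, Nat.zero_div, Nat.zero_div,
        hdiv (i : ℕ) (le_of_lt hi), hdiv ((i : ℕ) + 1) (by omega)]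
      have c1 : ((d ^ (m - (i : ℕ)) - 1 : ℕ) : ZMod d) = -1 := by
        rw [Nat.cast_sub (Nat.one_le_iff_ne_zero.mpr (pow_pos hd0 _).ne'), Nat.cast_pow,
          ZMod.natCast_self, zero_pow (by omega : m - (i : ℕ) ≠ 0)]
        simp
      by_cases him : (i : ℕ) = m - 1
      · have c2 : ((d ^ (m - ((i : ℕ) + 1)) - 1 : ℕ) : ZMod d) = 0 := by
          rw [show m - ((i : ℕ) + 1) = 0 by omega]
          simp
        rw [c1, c2, if_pos (by rw [Fin.ext_iff]; simp [him])]
        push_cast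
        ring
      · have c2 : ((d ^ (m - ((i : ℕ) + 1)) - 1 : ℕ) : ZMod d) = -1 := by
          rw [Nat.cast_sub (Nat.one_le_iff_ne_zero.mpr (pow_pos hd0 _).ne'), Nat.cast_pow,
            ZMod.natCast_self, zero_pow (by omega : m - ((i : ℕ) + 1) ≠ 0)]
          simp
        rw [c1, c2, if_neg (by rw [Fin.ext_iff]; simp; omega)]
        push_cast
        ring
end

section
/- For every integer m ≥ 2, there exists an orthogonal array OA(4^m, (4^m − 1)/3, 4, 2): an n × N matrix with n = (4^m − 1)/3 rows and N = 4^m columns over a 4-element symbol set such that for every pair of distinct rows, each of the 16 ordered pairs of symbols occurs exactly 4^{m−2} times among the columns of the corresponding 2 × N subarray. -/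
open Module Finset

namespace OAHamming

variable {K : Type*} [Field K] [Fintype K] {m : ℕ}

/-- The linear map `x ↦ (⟨a,x⟩, ⟨b,x⟩)`. -/
noncomputable def dotPair (a b : Fin m → K) : (Fin m → K) →ₗ[K] K × K where
  toFun x := (∑ i, a i * x i, ∑ i, b i * x i)
  map_add' x y := by
    simp [mul_add, Finset.sum_add_distrib, Prod.ext_iff]
  map_smul' c x := by
    simp [Finset.mul_sum, mul_left_comm, Prod.ext_iff]

lemma dotPair_apply (a b : Fin m → K) (x : Fin m → K) :
    dotPair a b x = (∑ i, a i * x i, ∑ i, b i * x i) := rfl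

lemma eq_zero_of_dot (y : Fin m → K) (h : ∀ x : Fin m → K, ∑ i, y i * x i = 0) : y = 0 := by
  classical
  funext j
  have := h (Pi.single j 1)
  rwa [Finset.sum_eq_single j (fun i _ hij => by rw [Pi.single_eq_of_ne hij, mul_zero])
    (fun hj => absurd (Finset.mem_univ j) hj), Pi.single_eq_same, mul_one] at this

lemma dotPair_surjective {a b : Fin m → K} (h : LinearIndependent K ![a, b]) :
    Function.Surjective (dotPair a b) := by
  rw [← LinearMap.range_eq_top]
  by_contra hne
  have hlt : LinearMap.range (dotPair a b) < ⊤ := lt_top_iff_ne_top.2 hne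
  have hfr : finrank K (LinearMap.range (dotPair a b)) < finrank K (K × K) :=
    Submodule.finrank_lt hlt.ne
  have h2 : finrank K (K × K) = 2 := by
    rw [Module.finrank_prod, finrank_self]
  have hP : (LinearMap.range (dotPair a b)).IsPrincipal := by
    rw [← Submodule.finrank_le_one_iff_isPrincipal]; omega
  obtain ⟨g, hg⟩ := hP
  have hmem : ∀ x, ∃ r : K, dotPair a b x = r • g := by
    intro x
    have : dotPair a b x ∈ LinearMap.range (dotPair a b) := ⟨x, rfl⟩
    rw [hg, Submodule.mem_span_singleton] at this
    obtain ⟨r, hr⟩ := this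
    exact ⟨r, hr.symm⟩
  -- pick (c, d) ≠ 0 annihilating the range
  obtain ⟨c, d, hcd, hzero⟩ :
      ∃ c d : K, ¬(c = 0 ∧ d = 0) ∧
        ∀ x : Fin m → K, c * (∑ i, a i * x i) + d * (∑ i, b i * x i) = 0 := by
    refine ⟨g.2, -g.1, ?_, ?_⟩
    · by_cases hg0 : g = (0 : K × K)
      · -- then the range is trivial, contradicting a ≠ 0
        exfalso
        have ha : a = 0 := by
          apply eq_zero_of_dot
          intro x
          obtain ⟨r, hr⟩ := hmem x
          rw [hg0, smul_zero, dotPair_apply] at hr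
          exact congrArg Prod.fst hr
        have := h.ne_zero 0
        simp [ha] at this
      · rintro ⟨h1, h2⟩
        exact hg0 (Prod.ext (by simpa using h2) h1)
    · intro x
      obtain ⟨r, hr⟩ := hmem x
      rw [dotPair_apply] at hr
      have h1 : (∑ i, a i * x i) = r * g.1 := congrArg Prod.fst hr
      have h2 : (∑ i, b i * x i) = r * g.2 := congrArg Prod.snd hr
      rw [h1, h2]
      ring
  have hab : c • a + d • b = 0 := by
    apply eq_zero_of_dot
    intro x
    have := hzero x
    rw [Finset.mul_sum, Finset.mul_sum, ← Finset.sum_add_distrib] at this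
    rw [← this]
    congr 1; funext i
    simp [Pi.add_apply, Pi.smul_apply, smul_eq_mul]
    ring
  exact hcd (LinearIndependent.pair_iff.1 h c d hab)

/-- For a surjective additive hom between finite groups, every fiber has size
`card M / card N`. -/
lemma card_fiber_mul {M N : Type*} [AddCommGroup M] [AddCommGroup N] [Fintype M] [Fintype N]
    [DecidableEq N] (f : M →+ N) (hf : Function.Surjective f) (c : N) :
    Fintype.card {x : M // f x = c} * Fintype.card N = Fintype.card M := by
  classical
  have key : ∀ d : N, Fintype.card {x : M // f x = d} = Fintype.card {x : M // f x = c} := by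
    intro d
    obtain ⟨x0, hx0⟩ := hf d
    obtain ⟨x1, hx1⟩ := hf c
    refine Fintype.card_congr ⟨fun x => ⟨x - x0 + x1, ?_⟩, fun y => ⟨y - x1 + x0, ?_⟩, ?_, ?_⟩
    · rw [map_add, map_sub, x.2, hx0, hx1]; abel
    · rw [map_add, map_sub, y.2, hx0, hx1]; abel
    · intro x; ext; simp
    · intro y; ext; simp
  have hsum : ∑ d : N, Fintype.card {x : M // f x = d} = Fintype.card M := by
    rw [← Fintype.card_sigma]
    exact Fintype.card_congr (Equiv.sigmaFiberEquiv f)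
  calc Fintype.card {x : M // f x = c} * Fintype.card N
      = ∑ _d : N, Fintype.card {x : M // f x = c} := by
        rw [Finset.sum_const, Finset.card_univ, smul_eq_mul, mul_comm]
    _ = ∑ d : N, Fintype.card {x : M // f x = d} := by
        exact Finset.sum_congr rfl fun d _ => (key d).symm
    _ = Fintype.card M := hsum

open scoped LinearAlgebra.Projectivization in
/-- Counting formula for the projectivization of a finite vector space. -/
lemma card_projectivization (K V : Type*) [Field K] [Fintype K] [AddCommGroup V] [Module K V]
    [Fintype V] [Fintype (ℙ K V)] :
    Fintype.card (ℙ K V) * (Fintype.card K - 1) = Fintype.card V - 1 := by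
  classical
  have hsub : Fintype.card {v : V // v ≠ 0} = Fintype.card V - 1 := by
    have := Fintype.card_subtype_compl (fun v : V => v = 0)
    simpa [Fintype.card_subtype_eq] using this
  have hfib : ∀ p : ℙ K V,
      Fintype.card {v : {w : V // w ≠ 0} // Projectivization.mk' K v = p} =
        Fintype.card Kˣ := by
    intro p
    symm
    apply Fintype.card_congr
    refine Equiv.ofBijective
      (fun u => ⟨⟨(u : K) • p.rep, by
        simp [smul_ne_zero, Units.ne_zero, Projectivization.rep_nonzero]⟩, ?_⟩) ⟨?_, ?_⟩
    · rw [Projectivization.mk'_eq_mk]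
      conv_rhs => rw [← p.mk_rep]
      rw [Projectivization.mk_eq_mk_iff]
      exact ⟨u, rfl⟩
    · intro u u' huu
      have h1 : (u : K) • p.rep = (u' : K) • p.rep := by
        simpa [Subtype.ext_iff] using huu
      have h2 : ((u : K) - (u' : K)) • p.rep = 0 := by
        rw [sub_smul, h1, sub_self]
      rcases smul_eq_zero.1 h2 with h | h
      · exact Units.ext (by linear_combination (norm := ring_nf) h)
      · exact absurd h p.rep_nonzero
    · rintro ⟨⟨v, hv⟩, hmk⟩
      rw [Projectivization.mk'_eq_mk] at hmk
      conv_rhs at hmk => rw [← p.mk_rep]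
      rw [Projectivization.mk_eq_mk_iff] at hmk
      obtain ⟨u, hu⟩ := hmk
      exact ⟨u, by simp [Subtype.ext_iff, Units.smul_def] at hu ⊢; exact hu⟩
  have hsum : ∑ p : ℙ K V,
      Fintype.card {v : {w : V // w ≠ 0} // Projectivization.mk' K v = p} =
        Fintype.card {v : V // v ≠ 0} := by
    rw [← Fintype.card_sigma]
    exact Fintype.card_congr (Equiv.sigmaFiberEquiv (Projectivization.mk' K))
  rw [← hsub, ← hsum]
  rw [Finset.sum_congr rfl fun p _ => hfib p, Finset.sum_const, Finset.card_univ, smul_eq_mul]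
  rw [Fintype.card_units]

end OAHamming

open scoped LinearAlgebra.Projectivization

/-- **Existence of the orthogonal arrays `OA(4^m, (4^m-1)/3, 4, 2)`.**  For every
`m ≥ 2` there is a matrix with `n = (4^m - 1)/3` rows and `N = 4^m` columns over a
four-element symbol set such that, for every pair of distinct rows, each of the
`16` ordered pairs of symbols appears exactly `4^{m-2}` times among the columns of
the corresponding `2 × N` subarray. -/
theorem orthogonal_array_from_hamming_exists (m : ℕ) (hm : 2 ≤ m) :
    ∃ A : Fin ((4 ^ m - 1) / 3) → Fin (4 ^ m) → Fin 4,
      ∀ r₁ r₂ : Fin ((4 ^ m - 1) / 3), r₁ ≠ r₂ →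
        ∀ v w : Fin 4,
          (Finset.univ.filter fun j : Fin (4 ^ m) => A r₁ j = v ∧ A r₂ j = w).card =
            4 ^ (m - 2) := by
  classical
  haveI : Fact (Nat.Prime 2) := ⟨Nat.prime_two⟩
  set K := GaloisField 2 2 with hKdef
  letI : Fintype K := Fintype.ofFinite _
  have hK : Fintype.card K = 4 := by
    have := GaloisField.card 2 2 (by norm_num)
    rwa [Nat.card_eq_fintype_card] at this
  have hV : Fintype.card (Fin m → K) = 4 ^ m := by
    rw [Fintype.card_fun, hK, Fintype.card_fin]
  haveI : Finite (ℙ K (Fin m → K)) := Quotient.finite _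
  letI : Fintype (ℙ K (Fin m → K)) := Fintype.ofFinite _
  have hP3 : Fintype.card (ℙ K (Fin m → K)) * 3 = 4 ^ m - 1 := by
    have := OAHamming.card_projectivization K (Fin m → K)
    rwa [hK, hV] at this
  have hP : Fintype.card (ℙ K (Fin m → K)) = (4 ^ m - 1) / 3 := by
    omega
  let eP : Fin ((4 ^ m - 1) / 3) ≃ ℙ K (Fin m → K) := (Fintype.equivFinOfCardEq hP).symm
  let eV : Fin (4 ^ m) ≃ (Fin m → K) := (Fintype.equivFinOfCardEq hV).symm
  let eF : K ≃ Fin 4 := Fintype.equivFinOfCardEq hK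
  refine ⟨fun r j => eF (∑ i, (eP r).rep i * eV j i), ?_⟩
  intro r₁ r₂ hr v w
  set a := (eP r₁).rep with ha
  set b := (eP r₂).rep with hb
  have hab : LinearIndependent K ![a, b] := by
    have hne : eP r₁ ≠ eP r₂ := fun h => hr (eP.injective h)
    have hind := (Projectivization.independent_pair_iff_ne (eP r₁) (eP r₂)).2 hne
    rw [Projectivization.independent_iff] at hind
    have : Projectivization.rep ∘ ![eP r₁, eP r₂] = ![a, b] := by
      funext i; fin_cases i <;> rfl
    rwa [this] at hind
  have hsurj : Function.Surjective (OAHamming.dotPair a b) := OAHamming.dotPair_surjective hab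
  have hsurj' : Function.Surjective (OAHamming.dotPair a b).toAddMonoidHom := hsurj
  have hcount := OAHamming.card_fiber_mul (OAHamming.dotPair a b).toAddMonoidHom hsurj'
    (eF.symm v, eF.symm w)
  rw [hV, Fintype.card_prod, hK] at hcount
  -- identify the filter with the fiber
  have hequiv : Fintype.card {j : Fin (4 ^ m) //
        eF (∑ i, a i * eV j i) = v ∧ eF (∑ i, b i * eV j i) = w} =
      Fintype.card {x : Fin m → K //
        (OAHamming.dotPair a b).toAddMonoidHom x = (eF.symm v, eF.symm w)} := by
    apply Fintype.card_congr
    refine Equiv.subtypeEquiv eV fun j => ?_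
    rw [LinearMap.toAddMonoidHom_coe, OAHamming.dotPair_apply, Prod.mk.injEq]
    constructor
    · rintro ⟨h1, h2⟩
      exact ⟨by rw [← h1, Equiv.symm_apply_apply], by rw [← h2, Equiv.symm_apply_apply]⟩
    · rintro ⟨h1, h2⟩
      exact ⟨by rw [h1, Equiv.apply_symm_apply], by rw [h2, Equiv.apply_symm_apply]⟩
  have hfilter : (Finset.univ.filter fun j : Fin (4 ^ m) =>
        eF (∑ i, a i * eV j i) = v ∧ eF (∑ i, b i * eV j i) = w).card =
      Fintype.card {j : Fin (4 ^ m) //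
        eF (∑ i, a i * eV j i) = v ∧ eF (∑ i, b i * eV j i) = w} :=
    (Fintype.card_subtype _).symm
  rw [hfilter, hequiv]
  -- finish with arithmetic
  have hpow : (4 : ℕ) ^ m = 4 ^ (m - 2) * (4 * 4) := by
    rw [show 4 * 4 = 4 ^ 2 by norm_num, ← pow_add]
    congr 1
    omega
  rw [hpow] at hcount
  exact Nat.eq_of_mul_eq_mul_right (by norm_num) hcount
end

section
/- Let m ≥ 2 and let C ⊆ F_4^n with n = (4^m − 1)/3 be the simplex code, i.e., the dual of the Hamming code H_{4,m}, which is an m-dimensional linear code over F_4. Then there exists a set D ⊆ F_4^n of at most 2m vectors and a cyclic enumeration c_1, …, c_{4^m} of all codewords of C such that every difference c_{t+1} − c_t (indices mod 4^m) lies in D. Consequently, the 4^m columns of the orthogonal array formed by the codewords of C can be ordered so that only 2m different pulse operators are needed for decoupling. -/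
set_option maxHeartbeats 1000000
set_option synthInstance.maxHeartbeats 200000


private lemma bitv_mod (d k : ℕ) (i : Fin d) :
    ((k % 2 ^ d / 2 ^ (i : ℕ) : ℕ) : ZMod 2) = ((k / 2 ^ (i : ℕ) : ℕ) : ZMod 2) := by
  have hi : (i : ℕ) < d := i.isLt
  conv_rhs => rw [← Nat.div_add_mod k (2 ^ d)]
  have h1 : 2 ^ d * (k / 2 ^ d) + k % 2 ^ d
      = 2 ^ (i : ℕ) * (2 ^ (d - (i : ℕ)) * (k / 2 ^ d)) + k % 2 ^ d := by
    rw [← mul_assoc, ← pow_add]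
    congr 3
    omega
  rw [h1, Nat.mul_add_div (Nat.pow_pos (by norm_num))]
  rw [Nat.cast_add]
  have h2 : ((2 ^ (d - (i : ℕ)) * (k / 2 ^ d) : ℕ) : ZMod 2) = 0 := by
    rw [ZMod.natCast_eq_zero_iff]
    exact Dvd.dvd.mul_right (dvd_pow_self 2 (by omega)) _
  rw [h2, zero_add]

private lemma bitv_succ (k : ℕ) (i : ℕ) :
    (((k + 1) / 2 ^ i : ℕ) : ZMod 2) - ((k / 2 ^ i : ℕ) : ZMod 2)
      = if 2 ^ i ∣ k + 1 then 1 else 0 := by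
  rw [Nat.succ_div, Nat.cast_add]
  split <;> simp

private lemma gray_exists (d N : ℕ) (hd : 0 < d) (hN : N = 2 ^ d) :
    ∃ D : Finset (Fin d → ZMod 2), D.card ≤ d ∧
      ∃ g : ZMod N → (Fin d → ZMod 2), Function.Bijective g ∧
        ∀ t, g (t + 1) - g t ∈ D := by
  subst hN
  haveI : NeZero (2 ^ d) := ⟨pow_ne_zero d (by norm_num)⟩
  refine ⟨Finset.image (fun j : Fin d => fun i : Fin d =>
      if (i : ℕ) ≤ (j : ℕ) then (1 : ZMod 2) else 0) Finset.univ,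
    le_trans Finset.card_image_le (by simp), fun t i => ((t.val / 2 ^ (i : ℕ) : ℕ) : ZMod 2),
    ?_, ?_⟩
  · rw [Fintype.bijective_iff_injective_and_card]
    constructor
    · intro t t' h
      apply ZMod.val_injective
      apply Nat.eq_of_testBit_eq
      intro i
      by_cases hi : i < d
      · have h0 := congrFun h ⟨i, hi⟩
        simp only at h0
        have hmod : t.val / 2 ^ i % 2 = t'.val / 2 ^ i % 2 :=
          (ZMod.natCast_eq_natCast_iff _ _ _).mp h0
        simp [Nat.testBit_eq_decide_div_mod_eq, hmod]
      · have h1 : t.val < 2 ^ i :=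
          lt_of_lt_of_le (ZMod.val_lt t) (Nat.pow_le_pow_right (by norm_num) (by omega))
        have h2 : t'.val < 2 ^ i :=
          lt_of_lt_of_le (ZMod.val_lt t') (Nat.pow_le_pow_right (by norm_num) (by omega))
        rw [Nat.testBit_lt_two_pow h1, Nat.testBit_lt_two_pow h2]
    · simp [ZMod.card]
  · intro t
    have hval : (t + 1).val = (t.val + 1) % 2 ^ d := by
      rw [ZMod.val_add, ZMod.val_one_eq_one_mod, Nat.add_mod_mod]
    refine Finset.mem_image.mpr ⟨⟨min ((t.val + 1).factorization 2) (d - 1), by omega⟩,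
      Finset.mem_univ _, ?_⟩
    funext i
    have hi : (i : ℕ) < d := i.isLt
    have key : (((t + 1).val / 2 ^ (i : ℕ) : ℕ) : ZMod 2) - ((t.val / 2 ^ (i : ℕ) : ℕ) : ZMod 2)
        = if 2 ^ (i : ℕ) ∣ t.val + 1 then 1 else 0 := by
      rw [hval, bitv_mod, bitv_succ]
    have hdv : 2 ^ (i : ℕ) ∣ t.val + 1 ↔ (i : ℕ) ≤ (t.val + 1).factorization 2 :=
      Nat.Prime.pow_dvd_iff_le_factorization Nat.prime_two (Nat.succ_ne_zero _)
    show (if (i : ℕ) ≤ (min ((t.val + 1).factorization 2) (d - 1)) then (1 : ZMod 2) else 0) = _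
    simp only [Pi.sub_apply]
    rw [key]
    by_cases hc : 2 ^ (i : ℕ) ∣ t.val + 1
    · rw [if_pos hc, if_pos (by have := hdv.mp hc; omega)]
    · rw [if_neg hc, if_neg (by intro hle; exact hc (hdv.mpr (by omega)))]

private lemma pow_aux (m : ℕ) : 3 * m + 1 ≤ 4 ^ m := by
  induction m with
  | zero => simp
  | succ k ih =>
    have h : 4 ^ (k + 1) = 4 * 4 ^ k := by ring
    omega

/-- **Gray-code ordering of the simplex code.** -/
theorem simplex_code_gray_ordering
    {F : Type*} [Field F] [Fintype F] [DecidableEq F]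
    (m : ℕ) (hF : Fintype.card F = 4) (hm : 2 ≤ m)
    (H : Submodule F (Fin ((4 ^ m - 1) / 3) → F))
    (hdim : Module.finrank F H = (4 ^ m - 1) / 3 - m)
    (hmin : ∀ x ∈ H, x ≠ 0 → 3 ≤ hammingNorm x)
    (hmin_attained : ∃ x ∈ H, x ≠ 0 ∧ hammingNorm x = 3)
    (C : Submodule F (Fin ((4 ^ m - 1) / 3) → F)) (hC : C = dualCode H) :
    ∃ D : Finset (Fin ((4 ^ m - 1) / 3) → F), D.card ≤ 2 * m ∧
      ∃ g : ZMod (4 ^ m) → C, Function.Bijective g ∧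
        ∀ t : ZMod (4 ^ m),
          ((g (t + 1) : Fin ((4 ^ m - 1) / 3) → F) - (g t : Fin ((4 ^ m - 1) / 3) → F)) ∈ D := by
  classical
  -- characteristic 2
  obtain ⟨p, hp⟩ := CharP.exists F
  haveI := hp
  have pp : p.Prime := CharP.char_is_prime F p
  obtain ⟨kk, -, hcard⟩ := FiniteField.card F p
  have hp2 : p = 2 := by
    have hd4 : p ∣ 4 := by
      rw [hF] at hcard
      rw [hcard]
      exact dvd_pow_self p kk.pos.ne'
    have hd2 : p ∣ 2 := pp.dvd_of_dvd_pow (show p ∣ 2 ^ 2 by norm_num at hd4 ⊢; exact hd4)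
    exact (Nat.prime_dvd_prime_iff_eq pp Nat.prime_two).mp hd2
  subst hp2
  have hmn : m ≤ (4 ^ m - 1) / 3 := by
    rw [Nat.le_div_iff_mul_le (by norm_num)]
    have := pow_aux m
    omega
  -- the standard bilinear form
  let B : LinearMap.BilinForm F (Fin ((4 ^ m - 1) / 3) → F) := LinearMap.mk₂ F (fun x y => ∑ i, x i * y i)
    (fun a b y => by simp [add_mul, Finset.sum_add_distrib])
    (fun c x y => by simp [Finset.mul_sum, mul_assoc])
    (fun x a b => by simp [mul_add, Finset.sum_add_distrib])
    (fun c x y => by simp [Finset.mul_sum, mul_left_comm])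
  have hB_apply : ∀ x y, B x y = ∑ i, x i * y i := fun x y => rfl
  have hrefl : B.IsRefl := by
    intro x y h
    rw [hB_apply] at h ⊢
    rw [Finset.sum_congr rfl fun i _ => mul_comm (y i) (x i)]
    exact h
  have hnd : B.Nondegenerate := by
    refine (LinearMap.IsRefl.nondegenerate_iff_separatingLeft hrefl).mpr ?_
    intro x hx
    funext i
    have h0 := hx (Pi.single i 1)
    rw [hB_apply] at h0
    simpa [Pi.single_apply] using h0
  have hCorth : C = B.orthogonal H := by
    rw [hC]
    ext x
    rw [LinearMap.BilinForm.mem_orthogonal_iff]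
    constructor
    · intro hx y hy
      have h1 : ∑ i, x i * y i = 0 := hx y hy
      rw [hB_apply,
        Finset.sum_congr rfl fun i _ => mul_comm (y i) (x i)]
      exact h1
    · intro hx y hy
      have h1 := hx y hy
      rw [hB_apply,
        Finset.sum_congr rfl fun i _ => mul_comm (y i) (x i)] at h1
      exact h1
  have hfin : Module.finrank F (Fin ((4 ^ m - 1) / 3) → F) = (4 ^ m - 1) / 3 := Module.finrank_fin_fun F
  have hrankC : Module.finrank F C = m := by
    rw [hCorth, LinearMap.BilinForm.finrank_orthogonal hnd, hfin, hdim]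
    omega
  haveI : Fintype C := Fintype.ofFinite C
  have hcardC : Fintype.card C = 4 ^ m := by
    rw [Module.card_eq_pow_finrank (K := F) (V := C), hF, hrankC]
  letI : Module (ZMod 2) C := AddCommGroup.zmodModule (n := 2) (by
    intro x
    have h2 : ((2 : ℕ) : F) = 0 := CharP.cast_eq_zero F 2
    have h3 := Nat.cast_smul_eq_nsmul F 2 x
    rw [← h3, h2, zero_smul])
  have h2r : (2 : ℕ) ^ Module.finrank (ZMod 2) C = 2 ^ (2 * m) := by
    have hc := Module.card_eq_pow_finrank (K := ZMod 2) (V := C)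
    rw [ZMod.card] at hc
    rw [← hc, hcardC, show (4 : ℕ) = 2 ^ 2 from rfl, ← pow_mul]
  have hr : Module.finrank (ZMod 2) C = 2 * m := Nat.pow_right_injective (le_refl 2) h2r
  haveI : Module.Finite (ZMod 2) C := Module.Finite.of_finite
  haveI : Module.Free (ZMod 2) C := Module.Free.of_divisionRing (ZMod 2) ↥C
  let bC : Module.Basis (Fin (2 * m)) (ZMod 2) C := Module.finBasisOfFinrankEq (ZMod 2) C hr
  let e := bC.equivFun
  obtain ⟨D0, hD0, g0, hg0, hdiff⟩ := gray_exists (2 * m) (4 ^ m) (by omega)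
    (by rw [show (4 : ℕ) = 2 ^ 2 from rfl, ← pow_mul])
  refine ⟨D0.image (fun x => ((e.symm x : C) : Fin ((4 ^ m - 1) / 3) → F)),
    le_trans Finset.card_image_le hD0, fun t => e.symm (g0 t),
    e.symm.bijective.comp hg0, ?_⟩
  intro t
  refine Finset.mem_image.mpr ⟨g0 (t + 1) - g0 t, hdiff t, ?_⟩
  show ((e.symm (g0 (t + 1) - g0 t) : C) : Fin ((4 ^ m - 1) / 3) → F) = _
  rw [map_sub, Submodule.coe_sub]
end

section
/- Let A be an orthogonal array OA(N, n, 4, 2) with entries in {0,1,2,3}, and identify symbols with the 2 × 2 Pauli matrices σ_0 = I, σ_1 = σ_x, σ_2 = σ_y, σ_3 = σ_z. For each column j ∈ {1, …, N} let P_j = σ_{A(1,j)} ⊗ σ_{A(2,j)} ⊗ ⋯ ⊗ σ_{A(n,j)} acting on (ℂ²)^{⊗n}. Let H be any pair-interaction Hamiltonian on n qubits with no local terms, i.e., H = Σ_{1 ≤ k < l ≤ n} Σ_{α,β ∈ {1,2,3}} J^{k,l}_{α,β} σ_α^{(k)} σ_β^{(l)} with real coefficients J^{k,l}_{α,β}, where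 σ_α^{(k)} denotes the Pauli matrix σ_α acting on qubit k tensored with identity elsewhere. Then Σ_{j=1}^N P_j† H P_j = 0, i.e., the orthogonal-array pulse scheme decouples all pair interactions. -/
open Matrix

/-- The four `2 × 2` Pauli matrices `σ_0 = I, σ_1 = σ_x, σ_2 = σ_y, σ_3 = σ_z`. -/
noncomputable def pauli : Fin 4 → Matrix (Fin 2) (Fin 2) ℂ :=
  ![1, !![0, 1; 1, 0], !![0, -Complex.I; Complex.I, 0], !![1, 0; 0, -1]]

/-- The tensor product `σ_{s 1} ⊗ σ_{s 2} ⊗ ⋯ ⊗ σ_{s n}` of Pauli matrices, acting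
on `(ℂ²)^{⊗ n}` (realized as matrices indexed by `Fin n → Fin 2`). -/
noncomputable def pauliTensor {n : ℕ} (s : Fin n → Fin 4) :
    Matrix (Fin n → Fin 2) (Fin n → Fin 2) ℂ :=
  Matrix.of fun x y => ∏ k, pauli (s k) (x k) (y k)

/-- The Pauli matrix `σ_α` acting on qubit `k` of an `n`-qubit system, tensored with
the identity on all other qubits. -/
noncomputable def pauliOn (n : ℕ) (k : Fin n) (α : Fin 4) :
    Matrix (Fin n → Fin 2) (Fin n → Fin 2) ℂ :=
  Matrix.of fun x y =>
    ∏ l, if l = k then pauli α (x l) (y l) else (if x l = y l then 1 else 0)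

/-! ### Auxiliary machinery -/

/-- The sign `ε(s, a) = ±1` such that `σ_s σ_a σ_s = ε(s,a) σ_a`. -/
def eps : Fin 4 → Fin 4 → ℤ := fun s a => if s = 0 ∨ a = 0 ∨ s = a then 1 else -1

lemma eps_sum (a : Fin 4) (ha : a ≠ 0) : ∑ v : Fin 4, eps v a = 0 := by
  revert ha; revert a; decide

lemma pauli_herm (s : Fin 4) : (pauli s)ᴴ = pauli s := by
  fin_cases s <;> ext i j <;> fin_cases i <;> fin_cases j <;>
    simp [pauli, conjTranspose_apply, Complex.ext_iff]

lemma pauli_conj (s a : Fin 4) :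
    pauli s * pauli a * pauli s = ((eps s a : ℤ) : ℂ) • pauli a := by
  fin_cases s <;> fin_cases a <;>
    simp [pauli, eps] <;> ext i j <;> fin_cases i <;> fin_cases j <;>
    simp [Matrix.mul_apply, Fin.sum_univ_two, Complex.ext_iff]

lemma pauli_mul_self (s : Fin 4) : pauli s * pauli s = 1 := by
  fin_cases s <;> ext i j <;> fin_cases i <;> fin_cases j <;>
    simp [pauli, Matrix.mul_apply, Fin.sum_univ_two, Matrix.one_apply, Complex.ext_iff]

/-- Generic tensor product of `2 × 2` matrices. -/
noncomputable def tensorMat {n : ℕ} (m : Fin n → Matrix (Fin 2) (Fin 2) ℂ) :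
    Matrix (Fin n → Fin 2) (Fin n → Fin 2) ℂ :=
  Matrix.of fun x y => ∏ k, m k (x k) (y k)

lemma tensorMat_mul {n : ℕ} (m₁ m₂ : Fin n → Matrix (Fin 2) (Fin 2) ℂ) :
    tensorMat m₁ * tensorMat m₂ = tensorMat fun k => m₁ k * m₂ k := by
  ext x y
  simp only [tensorMat, Matrix.mul_apply, Matrix.of_apply]
  rw [show (∏ k, ∑ a : Fin 2, m₁ k (x k) a * m₂ k a (y k)) =
      ∑ p ∈ Fintype.piFinset fun _ : Fin n => (Finset.univ : Finset (Fin 2)),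
        ∏ k, m₁ k (x k) (p k) * m₂ k (p k) (y k) from Finset.prod_univ_sum _ _]
  rw [Fintype.piFinset_univ]
  simp [Finset.prod_mul_distrib]

lemma tensorMat_conjT {n : ℕ} (m : Fin n → Matrix (Fin 2) (Fin 2) ℂ) :
    (tensorMat m)ᴴ = tensorMat fun k => (m k)ᴴ := by
  ext x y
  simp [tensorMat, conjTranspose_apply, map_prod]

lemma tensorMat_smul {n : ℕ} (c : Fin n → ℂ) (m : Fin n → Matrix (Fin 2) (Fin 2) ℂ) :
    tensorMat (fun k => c k • m k) = (∏ k, c k) • tensorMat m := by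
  ext x y
  simp [tensorMat, Finset.prod_mul_distrib, mul_comm]

lemma pauliTensor_eq {n : ℕ} (s : Fin n → Fin 4) :
    pauliTensor s = tensorMat fun k => pauli (s k) := rfl

lemma pauliOn_eq (n : ℕ) (k : Fin n) (α : Fin 4) :
    pauliOn n k α = tensorMat fun l => if l = k then pauli α else 1 := by
  ext x y
  simp only [pauliOn, tensorMat, Matrix.of_apply]
  refine Finset.prod_congr rfl fun l _ => ?_
  by_cases h : l = k <;> simp [h, Matrix.one_apply]

/-- Key conjugation identity: conjugating a two-site interaction term by a Pauli
tensor product yields the same term up to a sign. -/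
lemma conj_key {n : ℕ} (s : Fin n → Fin 4) (k l : Fin n) (hkl : k ≠ l) (α β : Fin 4) :
    (pauliTensor s)ᴴ * (pauliOn n k α * pauliOn n l β) * pauliTensor s
      = ((eps (s k) α * eps (s l) β : ℤ) : ℂ) • (pauliOn n k α * pauliOn n l β) := by
  rw [pauliTensor_eq, pauliOn_eq, pauliOn_eq, tensorMat_conjT]
  simp only [pauli_herm]
  rw [tensorMat_mul, tensorMat_mul, tensorMat_mul]
  set c : Fin n → ℂ := fun m =>
    if m = k then ((eps (s k) α : ℤ) : ℂ) else if m = l then ((eps (s l) β : ℤ) : ℂ) else 1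
    with hc
  set h : Fin n → Matrix (Fin 2) (Fin 2) ℂ := fun m =>
    (if m = k then pauli α else 1) * (if m = l then pauli β else 1) with hh
  have hg : (fun m => pauli (s m) *
        ((if m = k then pauli α else 1) * (if m = l then pauli β else 1)) * pauli (s m))
      = fun m => c m • h m := by
    funext m
    by_cases hmk : m = k
    · subst hmk
      simp only [hc, hh, if_pos rfl, if_neg hkl, mul_one, if_true, eq_self_iff_true]
      exact pauli_conj _ _
    · by_cases hml : m = l
      · subst hml
        simp only [hc, hh, if_neg hmk, if_pos rfl, one_mul, if_true, eq_self_iff_true]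
        exact pauli_conj _ _
      · simp only [hc, hh, if_neg hmk, if_neg hml, mul_one, one_smul]
        exact pauli_mul_self _
  rw [hg, tensorMat_smul, ← tensorMat_mul]
  congr 1
  rw [← Finset.mul_prod_erase Finset.univ c (Finset.mem_univ k)]
  have hlk : l ∈ Finset.univ.erase k := Finset.mem_erase.mpr ⟨Ne.symm hkl, Finset.mem_univ l⟩
  rw [← Finset.mul_prod_erase _ c hlk]
  have h1 : ∏ m ∈ (Finset.univ.erase k).erase l, c m = 1 := by
    refine Finset.prod_eq_one fun m hm => ?_
    obtain ⟨hml, hm'⟩ := Finset.mem_erase.mp hm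
    obtain ⟨hmk, _⟩ := Finset.mem_erase.mp hm'
    simp [hc, hmk, hml]
  rw [h1, mul_one]
  simp only [hc, if_pos rfl, if_neg (Ne.symm hkl)]
  push_cast
  ring

lemma eps_count_sum {n N : ℕ} (A : Fin n → Fin N → Fin 4)
    (hOA : ∀ r₁ r₂ : Fin n, r₁ ≠ r₂ → ∀ v w : Fin 4,
      (Finset.univ.filter fun j : Fin N => A r₁ j = v ∧ A r₂ j = w).card = N / 16)
    (k l : Fin n) (hkl : k ≠ l) (α β : Fin 4) (hα : α ≠ 0) (hβ : β ≠ 0) :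
    ∑ j : Fin N, eps (A k j) α * eps (A l j) β = 0 := by
  rw [← Finset.sum_fiberwise Finset.univ (fun j => (A k j, A l j))
    (fun j => eps (A k j) α * eps (A l j) β)]
  have step : ∀ p : Fin 4 × Fin 4,
      (∑ j ∈ Finset.univ.filter (fun j => (A k j, A l j) = p),
        eps (A k j) α * eps (A l j) β) = (N / 16 : ℕ) • (eps p.1 α * eps p.2 β) := by
    rintro ⟨v, w⟩
    rw [show (Finset.univ.filter fun j => (A k j, A l j) = (v, w))
        = Finset.univ.filter fun j : Fin N => A k j = v ∧ A l j = w by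
      apply Finset.filter_congr; intro j _; simp [Prod.ext_iff]]
    rw [Finset.sum_congr rfl (fun j hj => by
      obtain ⟨h1, h2⟩ := (Finset.mem_filter.mp hj).2
      rw [h1, h2])]
    rw [Finset.sum_const, hOA k l hkl v w]
  rw [Finset.sum_congr rfl fun p _ => step p, ← Finset.smul_sum]
  have : (∑ p : Fin 4 × Fin 4, eps p.1 α * eps p.2 β) = 0 := by
    rw [Fintype.sum_prod_type]
    dsimp only
    rw [← Finset.sum_mul_sum, eps_sum α hα, zero_mul]
  rw [this, smul_zero]

/-- **Orthogonal arrays decouple pair-interaction Hamiltonians.**  Let `A` be an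
orthogonal array `OA(N, n, 4, 2)` with entries in `{0,1,2,3}`, and for each column
`j` let `P_j = σ_{A(1,j)} ⊗ ⋯ ⊗ σ_{A(n,j)}`.  Then for every pair-interaction
Hamiltonian `H = Σ_{k<l} Σ_{α,β ≠ 0} J^{k,l}_{α,β} σ_α^{(k)} σ_β^{(l)}` on `n`
qubits with no local terms, one has `Σ_{j=1}^{N} P_j† H P_j = 0`. -/
theorem orthogonal_array_decouples (n N : ℕ)
    (A : Fin n → Fin N → Fin 4)
    (hOA : ∀ r₁ r₂ : Fin n, r₁ ≠ r₂ → ∀ v w : Fin 4,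
      (Finset.univ.filter fun j : Fin N => A r₁ j = v ∧ A r₂ j = w).card = N / 16)
    (J : Fin n → Fin n → Fin 4 → Fin 4 → ℝ)
    (hJ : ∀ k l : Fin n, ∀ α β : Fin 4,
      (¬ k < l ∨ α = 0 ∨ β = 0) → J k l α β = 0)
    (H : Matrix (Fin n → Fin 2) (Fin n → Fin 2) ℂ)
    (hH : H = ∑ k : Fin n, ∑ l : Fin n, ∑ α : Fin 4, ∑ β : Fin 4,
      (J k l α β : ℂ) • (pauliOn n k α * pauliOn n l β)) :
    ∑ j : Fin N, (pauliTensor fun k => A k j)ᴴ * H * (pauliTensor fun k => A k j) = 0 := by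
  subst hH
  simp only [Finset.mul_sum, Finset.sum_mul, Matrix.mul_smul, Matrix.smul_mul]
  rw [Finset.sum_comm]
  refine Finset.sum_eq_zero fun k _ => ?_
  rw [Finset.sum_comm]
  refine Finset.sum_eq_zero fun l _ => ?_
  rw [Finset.sum_comm]
  refine Finset.sum_eq_zero fun α _ => ?_
  rw [Finset.sum_comm]
  refine Finset.sum_eq_zero fun β _ => ?_
  by_cases hz : J k l α β = 0
  · simp [hz]
  · have h' := hJ k l α β
    have hklt : k < l := by by_contra h; exact hz (h' (Or.inl h))
    have hα : α ≠ 0 := fun h => hz (h' (Or.inr (Or.inl h)))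
    have hβ : β ≠ 0 := fun h => hz (h' (Or.inr (Or.inr h)))
    have hkl : k ≠ l := ne_of_lt hklt
    calc ∑ j : Fin N, (J k l α β : ℂ) •
          ((pauliTensor fun m => A m j)ᴴ * (pauliOn n k α * pauliOn n l β) *
            (pauliTensor fun m => A m j))
        = ∑ j : Fin N, (J k l α β : ℂ) •
            (((eps (A k j) α * eps (A l j) β : ℤ) : ℂ) •
              (pauliOn n k α * pauliOn n l β)) := by
          refine Finset.sum_congr rfl fun j _ => ?_
          rw [conj_key (fun m => A m j) k l hkl α β]
      _ = (J k l α β : ℂ) •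
            ((((∑ j : Fin N, eps (A k j) α * eps (A l j) β : ℤ)) : ℂ) •
              (pauliOn n k α * pauliOn n l β)) := by
          rw [← Finset.smul_sum, ← Finset.sum_smul]
          push_cast
          rfl
      _ = 0 := by rw [eps_count_sum A hOA k l hkl α β hα hβ]; simp
end
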